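/- Let x, x_s ∈ R^{nN}, u = (u^1;...;u^N), u_s = (u_s^1;...;u_s^N) ∈ R^{mN}, Q̃ ⪰ 0 an nN×nN matrix, ρ^1,...,ρ^N > 0, U ≥ 0, and define the fair stage cost ℓ_fair(x,u) = ‖x - x_s‖²_{Q̃} + ∑_{i=1}^N ρ^i(‖u^i‖₁ - U/N)², and the standard stage cost ℓ(x,u) = ‖x - x_s‖²_{Q̃} + ∑_{i=1}^N m·ρ^i·‖u^i - u_s^i‖₂². If ∑_{i=1}^N ‖u^i‖₁ ≤ U, then ℓ_fair(x,u) ≤ ℓ(x,u) + ((N²+1)/N²)·(∑_{i=1}^N ρ^i)·U². -/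
import Mathlib


open Matrix

/-- Lemma 3, Fair-MPC vs MPC part II: under the allocation constraint,
the fair stage cost is bounded by the standard stage cost plus `((N²+1)/N²)(∑ρ^i)U²`. -/
theorem stmt_8 (N n m : ℕ) (hN : 0 < N)
    (Qt : Matrix (Fin N × Fin n) (Fin N × Fin n) ℝ) (hQt : Qt.PosSemidef)
    (x xs : Fin N × Fin n → ℝ)
    (u us : Fin N → Fin m → ℝ)
    (ρ : Fin N → ℝ) (hρ : ∀ i, 0 < ρ i)
    (U : ℝ) (hU : 0 ≤ U)
    (halloc : ∑ i, ∑ j, |u i j| ≤ U) :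
    (x - xs) ⬝ᵥ Qt.mulVec (x - xs) + ∑ i, ρ i * ((∑ j, |u i j|) - U / N) ^ 2 ≤
      ((x - xs) ⬝ᵥ Qt.mulVec (x - xs) + ∑ i, (m : ℝ) * ρ i * ∑ j, (u i j - us i j) ^ 2) +
        (((N : ℝ) ^ 2 + 1) / (N : ℝ) ^ 2) * (∑ i, ρ i) * U ^ 2 := by
  have hNpos : (0 : ℝ) < (N : ℝ) := by exact_mod_cast hN
  have hsum_nonneg : 0 ≤ ∑ i, (m : ℝ) * ρ i * ∑ j, (u i j - us i j) ^ 2 := by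
    apply Finset.sum_nonneg
    intro i _
    have : 0 ≤ ∑ j, (u i j - us i j) ^ 2 :=
      Finset.sum_nonneg fun j _ => sq_nonneg _
    exact mul_nonneg (mul_nonneg (Nat.cast_nonneg m) (hρ i).le) this
  have key : ∑ i, ρ i * ((∑ j, |u i j|) - U / N) ^ 2 ≤
      (((N : ℝ) ^ 2 + 1) / (N : ℝ) ^ 2) * (∑ i, ρ i) * U ^ 2 := by
    have h1 : ∀ i, ρ i * ((∑ j, |u i j|) - U / N) ^ 2 ≤
        ρ i * ((((N : ℝ) ^ 2 + 1) / (N : ℝ) ^ 2) * U ^ 2) := by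
      intro i
      have hs0 : 0 ≤ ∑ j, |u i j| :=
        Finset.sum_nonneg fun j _ => abs_nonneg _
      have hsU : ∑ j, |u i j| ≤ U := by
        calc ∑ j, |u i j| ≤ ∑ i, ∑ j, |u i j| := by
              apply Finset.single_le_sum (f := fun i => ∑ j, |u i j|)
                (fun i _ => Finset.sum_nonneg fun j _ => abs_nonneg _) (Finset.mem_univ i)
          _ ≤ U := halloc
      have hρi := (hρ i).le
      have hbound : ((∑ j, |u i j|) - U / N) ^ 2 ≤
          (((N : ℝ) ^ 2 + 1) / (N : ℝ) ^ 2) * U ^ 2 := by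
        rw [div_mul_eq_mul_div, le_div_iff₀ (by positivity)]
        have heq : ((∑ j, |u i j|) - U / N) * N = (∑ j, |u i j|) * N - U := by
          field_simp
        have : ((∑ j, |u i j|) - U / N) ^ 2 * (N:ℝ) ^ 2 =
            ((∑ j, |u i j|) * N - U) ^ 2 := by
          rw [← mul_pow, heq]
        rw [this]
        have hsq : (∑ j, |u i j|) * (∑ j, |u i j|) * (N:ℝ)^2 ≤ U * U * (N:ℝ)^2 :=
          mul_le_mul_of_nonneg_right (mul_le_mul hsU hsU hs0 hU) (sq_nonneg _)
        nlinarith [mul_nonneg (mul_nonneg hs0 hNpos.le) hU]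
      exact mul_le_mul_of_nonneg_left hbound hρi
    calc ∑ i, ρ i * ((∑ j, |u i j|) - U / N) ^ 2
        ≤ ∑ i, ρ i * ((((N : ℝ) ^ 2 + 1) / (N : ℝ) ^ 2) * U ^ 2) :=
          Finset.sum_le_sum fun i _ => h1 i
      _ = (((N : ℝ) ^ 2 + 1) / (N : ℝ) ^ 2) * (∑ i, ρ i) * U ^ 2 := by
          rw [← Finset.sum_mul]; ring
  linarith
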